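/- For complex s with Re(s) > -2, s ≠ 1, the limit lim_{N→∞} ( ∑_{n=1}^N n^{-s} - N^{1-s}/(1-s) - (1/2)N^{-s} + (s/12)·N^{-s-1} ) exists and equals ζ(s). -/

import Mathlib

open Finset Filter Complex

noncomputable section ZetaEM

/-- `(1-s)` times the Euler–Maclaurin-corrected partial sum. -/
def psiZ (s : ℂ) (N : ℕ) : ℂ :=
  (1 - s) * (∑ n ∈ Finset.Icc 1 N, (n : ℂ) ^ (-s)) - (N : ℂ) ^ (1 - s)
    - ((1 - s) / 2) * (N : ℂ) ^ (-s) + ((1 - s) * s / 12) * (N : ℂ) ^ (-s - 1)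

/-- Explicit antiderivative for the Euler–Maclaurin remainder. -/
def emF (s : ℂ) (n : ℕ) (x : ℝ) : ℂ :=
  (1 / 12) * (2 * ((-s) * (-s - 1) * (-s - 2)) * (x : ℂ) ^ (1 - s)
    - (6 * n + 3) * ((1 - s) * (-s - 1) * (-s - 2)) * (x : ℂ) ^ (-s)
    + (6 * (n : ℂ) ^ 2 + 6 * n + 1) * ((1 - s) * (-s) * (-s - 2)) * (x : ℂ) ^ (-s - 1)
    - (2 * (n : ℂ) ^ 3 + 3 * (n : ℂ) ^ 2 + n) * ((1 - s) * (-s) * (-s - 1)) * (x : ℂ) ^ (-s - 2))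

/-- The Euler–Maclaurin remainder integrand. -/
def emG (s : ℂ) (n : ℕ) (x : ℝ) : ℂ :=
  ((1 - s) * (-s) * (-s - 1) * (-s - 2) / 12) * (2 * (x : ℂ) ^ (-s)
    - (6 * n + 3) * (x : ℂ) ^ (-s - 1)
    + (6 * (n : ℂ) ^ 2 + 6 * n + 1) * (x : ℂ) ^ (-s - 2)
    - (2 * (n : ℂ) ^ 3 + 3 * (n : ℂ) ^ 2 + n) * (x : ℂ) ^ (-s - 3))

lemma hasDerivAt_ofReal_cpow_const'' {x : ℝ} (hx : 0 < x) (c : ℂ) :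
    HasDerivAt (fun y : ℝ => (y : ℂ) ^ c) (c * (x : ℂ) ^ (c - 1)) x := by
  have h := (Complex.hasStrictDerivAt_cpow_const
    (x := (x : ℂ)) (c := c) (by exact Complex.ofReal_mem_slitPlane.2 hx)).hasDerivAt
  exact h.comp_ofReal

lemma cpow_shift {x : ℂ} (hx : x ≠ 0) (s : ℂ) (k : ℕ) :
    x ^ (-s - 3 + (k : ℂ)) = x ^ (k : ℕ) * x ^ (-s - 3 : ℂ) := by
  rw [add_comm, Complex.cpow_add _ _ hx, Complex.cpow_natCast]

lemma hasDerivAt_emF (s : ℂ) (n : ℕ) {x : ℝ} (hx : 0 < x) :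
    HasDerivAt (emF s n) (emG s n x) x := by
  have h1 := (hasDerivAt_ofReal_cpow_const'' hx (1 - s)).const_mul
    ((1 / 12 : ℂ) * (2 * ((-s) * (-s - 1) * (-s - 2))))
  have h2 := (hasDerivAt_ofReal_cpow_const'' hx (-s)).const_mul
    ((1 / 12 : ℂ) * ((6 * n + 3) * ((1 - s) * (-s - 1) * (-s - 2))))
  have h3 := (hasDerivAt_ofReal_cpow_const'' hx (-s - 1)).const_mul
    ((1 / 12 : ℂ) * ((6 * (n : ℂ) ^ 2 + 6 * n + 1) * ((1 - s) * (-s) * (-s - 2))))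
  have h4 := (hasDerivAt_ofReal_cpow_const'' hx (-s - 2)).const_mul
    ((1 / 12 : ℂ) * ((2 * (n : ℂ) ^ 3 + 3 * (n : ℂ) ^ 2 + n) * ((1 - s) * (-s) * (-s - 1))))
  have H := ((h1.sub h2).add h3).sub h4
  have e1 : (1 : ℂ) - s - 1 = -s := by ring
  have e2 : -s - 1 - 1 = -s - 2 := by ring
  have e3 : -s - 2 - 1 = -s - 3 := by ring
  rw [e1, e2, e3] at H
  refine HasDerivAt.congr_deriv (HasDerivAt.congr_of_eventuallyEq H
    (Filter.Eventually.of_forall fun y => congrFun ?_ y)) ?_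
  · funext y; simp only [emF, Pi.sub_apply, Pi.add_apply]; ring
  · simp only [emG]; ring

lemma emG_continuousOn (s : ℂ) (n : ℕ) :
    ContinuousOn (emG s n) {x : ℝ | 0 < x} := by
  intro x hx
  have h : ∀ c : ℂ, ContinuousAt (fun x : ℝ => (x : ℂ) ^ c) x :=
    fun c => Complex.continuousAt_ofReal_cpow_const x c (Or.inr (ne_of_gt hx))
  exact ContinuousAt.continuousWithinAt <| continuousAt_const.mul <|
    (((continuousAt_const.mul (h (-s))).sub (continuousAt_const.mul (h (-s-1)))).add
      (continuousAt_const.mul (h (-s-2)))).sub (continuousAt_const.mul (h (-s-3)))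

lemma psiZ_diff (s : ℂ) (n : ℕ) (hn : 1 ≤ n) :
    psiZ s (n + 1) - psiZ s n = ∫ x in (n : ℝ)..(n + 1 : ℕ), emG s n x := by
  have hInt : ∫ x in (n : ℝ)..(n + 1 : ℕ), emG s n x = emF s n (n + 1 : ℕ) - emF s n n := by
    apply intervalIntegral.integral_eq_sub_of_hasDerivAt
    · intro x hx
      rw [Set.uIcc_of_le (by push_cast; linarith)] at hx
      have hx0 : 0 < x := lt_of_lt_of_le (by exact_mod_cast hn) hx.1
      exact hasDerivAt_emF s n hx0
    · apply ContinuousOn.intervalIntegrable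
      apply (emG_continuousOn s n).mono
      intro x hx
      rw [Set.uIcc_of_le (by push_cast; linarith)] at hx
      exact lt_of_lt_of_le (by exact_mod_cast hn : (0:ℝ) < n) hx.1
  rw [hInt]
  -- now a pure algebraic identity
  have hsum : ∑ k ∈ Finset.Icc 1 (n + 1), (k : ℂ) ^ (-s)
      = (∑ k ∈ Finset.Icc 1 n, (k : ℂ) ^ (-s)) + ((n + 1 : ℕ) : ℂ) ^ (-s) :=
    Finset.sum_Icc_succ_top (by omega) _
  have hn0 : ((n : ℂ)) ≠ 0 := (Nat.cast_ne_zero (R := ℂ)).mpr (by omega)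
  have hm0 : ((n : ℂ) + 1) ≠ 0 := by
    have : (((n + 1 : ℕ) : ℂ)) ≠ 0 := (Nat.cast_ne_zero (R := ℂ)).mpr (by omega)
    push_cast at this; exact this
  have shift : ∀ (x : ℂ), x ≠ 0 →
      x ^ (1 - s) = x ^ (4:ℕ) * x ^ (-s - 3 : ℂ)
      ∧ x ^ (-s) = x ^ (3:ℕ) * x ^ (-s - 3 : ℂ)
      ∧ x ^ (-s - 1) = x ^ (2:ℕ) * x ^ (-s - 3 : ℂ)
      ∧ x ^ (-s - 2) = x ^ (1:ℕ) * x ^ (-s - 3 : ℂ) := by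
    intro x hx
    refine ⟨?_, ?_, ?_, ?_⟩
    · rw [← cpow_shift hx]; congr 1; push_cast; ring
    · rw [← cpow_shift hx]; congr 1; push_cast; ring
    · rw [← cpow_shift hx]; congr 1; push_cast; ring
    · rw [← cpow_shift hx]; congr 1; push_cast; ring
  simp only [psiZ, emF, hsum]
  push_cast
  obtain ⟨a1, a2, a3, a4⟩ := shift _ hn0
  obtain ⟨b1, b2, b3, b4⟩ := shift _ hm0
  rw [a1, a2, a3, a4, b1, b2, b3, b4]
  ring


lemma cpow_shift4 (x : ℂ) (hx : x ≠ 0) (s : ℂ) :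
      x ^ (-s) = x ^ (3:ℕ) * x ^ (-s - 3 : ℂ)
      ∧ x ^ (-s - 1) = x ^ (2:ℕ) * x ^ (-s - 3 : ℂ)
      ∧ x ^ (-s - 2) = x ^ (1:ℕ) * x ^ (-s - 3 : ℂ) := by
  refine ⟨?_, ?_, ?_⟩
  · rw [← cpow_shift hx]; congr 1; push_cast; ring
  · rw [← cpow_shift hx]; congr 1; push_cast; ring
  · rw [← cpow_shift hx]; congr 1; push_cast; ring

lemma emG_eq (s : ℂ) (n : ℕ) {x : ℝ} (hx : 0 < x) :
    emG s n x = ((1 - s) * (-s) * (-s - 1) * (-s - 2))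
      * ((((2 * (x - n) ^ 3 - 3 * (x - n) ^ 2 + (x - n)) / 12 : ℝ)) : ℂ)
      * (x : ℂ) ^ (-s - 3 : ℂ) := by
  have hx0 : ((x : ℂ)) ≠ 0 := Complex.ofReal_ne_zero.mpr hx.ne'
  obtain ⟨c1, c2, c3⟩ := cpow_shift4 _ hx0 s
  simp only [emG]
  rw [c1, c2, c3]
  push_cast
  ring

lemma norm_emG_le (s : ℂ) (n : ℕ) (hre : -3 < s.re) (hn : 1 ≤ n) {x : ℝ}
    (hx1 : (n : ℝ) ≤ x) (hx2 : x ≤ (n : ℝ) + 1) :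
    ‖emG s n x‖ ≤ ‖(1 - s) * (-s) * (-s - 1) * (-s - 2)‖ * (1 / 48)
      * (n : ℝ) ^ (-s.re - 3) := by
  have hn' : (1 : ℝ) ≤ (n : ℝ) := by exact_mod_cast hn
  have hx0 : (0 : ℝ) < x := lt_of_lt_of_le (by linarith) hx1
  rw [emG_eq s n hx0, norm_mul, norm_mul]
  have hQ : ‖((((2 * (x - n) ^ 3 - 3 * (x - n) ^ 2 + (x - n)) / 12 : ℝ)) : ℂ)‖ ≤ 1 / 48 := by
    rw [Complex.norm_real]
    have ht0 : (0:ℝ) ≤ x - n := by linarith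
    have ht1 : x - (n:ℝ) ≤ 1 := by linarith
    set t : ℝ := x - (n:ℝ) with ht
    clear_value t
    rw [Real.norm_eq_abs, abs_div, _root_.abs_of_nonneg (by norm_num : (0:ℝ) ≤ 12)]
    rw [div_le_iff₀ (by norm_num : (0:ℝ) < 12)]
    rw [abs_le]
    constructor <;> nlinarith [sq_nonneg (t - 1/2),
      mul_nonneg (mul_nonneg ht0 ht0) (sub_nonneg.2 ht1),
      mul_nonneg (mul_nonneg (sub_nonneg.2 ht1) (sub_nonneg.2 ht1)) ht0]
  have hpow : ‖(x : ℂ) ^ (-s - 3 : ℂ)‖ ≤ (n : ℝ) ^ (-s.re - 3) := by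
    rw [Complex.norm_cpow_eq_rpow_re_of_pos hx0]
    have hre' : (-s - 3 : ℂ).re = -s.re - 3 := by simp
    rw [hre']
    exact Real.rpow_le_rpow_of_nonpos (by linarith) hx1 (by linarith)
  gcongr

lemma norm_psiZ_diff (s : ℂ) (n : ℕ) (hre : -3 < s.re) (hn : 1 ≤ n) :
    ‖psiZ s (n + 1) - psiZ s n‖ ≤ ‖(1 - s) * (-s) * (-s - 1) * (-s - 2)‖ * (1 / 48)
      * (n : ℝ) ^ (-s.re - 3) := by
  rw [psiZ_diff s n hn]
  have h := intervalIntegral.norm_integral_le_of_norm_le_const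
    (C := ‖(1 - s) * (-s) * (-s - 1) * (-s - 2)‖ * (1 / 48) * (n : ℝ) ^ (-s.re - 3))
    (f := emG s n) (a := (n : ℝ)) (b := ((n + 1 : ℕ) : ℝ)) ?_
  · refine le_trans h ?_
    have : |((n + 1 : ℕ) : ℝ) - (n : ℝ)| = 1 := by push_cast; simp
    rw [this, mul_one]
  · intro x hx
    rw [Set.uIoc_of_le (by push_cast; linarith)] at hx
    exact norm_emG_le s n hre hn hx.1.le (by push_cast at hx ⊢; linarith [hx.2])

/-- The limit function: `(1-s)` times the continued zeta. -/
def PsiL (s : ℂ) : ℂ := psiZ s 1 + ∑' k : ℕ, (psiZ s (k + 1 + 1) - psiZ s (k + 1))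

lemma summable_psiZ_diff (s : ℂ) (hs : -2 < s.re) :
    Summable (fun k : ℕ => psiZ s (k + 1 + 1) - psiZ s (k + 1)) := by
  apply Summable.of_norm_bounded
    (g := fun k : ℕ => ‖(1 - s) * (-s) * (-s - 1) * (-s - 2)‖ * (1 / 48)
      * ((k + 1 : ℕ) : ℝ) ^ (-s.re - 3))
  · exact ((summable_nat_add_iff 1).2
      (Real.summable_nat_rpow.2 (by linarith))).mul_left _
  · intro k
    exact norm_psiZ_diff s (k + 1) (by linarith) (by omega)

lemma tendsto_psiZ (s : ℂ) (hs : -2 < s.re) :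
    Tendsto (psiZ s) atTop (nhds (PsiL s)) := by
  have hsml := summable_psiZ_diff s hs
  have h1 : Tendsto (fun M : ℕ => ∑ k ∈ Finset.range M, (psiZ s (k + 1 + 1) - psiZ s (k + 1)))
      atTop (nhds (∑' k : ℕ, (psiZ s (k + 1 + 1) - psiZ s (k + 1)))) :=
    hsml.hasSum.tendsto_sum_nat
  have h2 : ∀ M : ℕ, ∑ k ∈ Finset.range M, (psiZ s (k + 1 + 1) - psiZ s (k + 1))
      = psiZ s (M + 1) - psiZ s 1 :=
    fun M => Finset.sum_range_sub (fun k => psiZ s (k + 1)) M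
  have h3 : Tendsto (fun M : ℕ => psiZ s (M + 1)) atTop (nhds (PsiL s)) := by
    have := (h1.congr (fun M => h2 M)).add (tendsto_const_nhds (x := psiZ s 1))
    simp only [sub_add_cancel] at this
    convert this using 2
    rw [PsiL]; ring
  exact (tendsto_add_atTop_iff_nat 1).1 h3

lemma differentiable_psiZ (N : ℕ) (hN : N ≠ 0) :
    Differentiable ℂ (fun z : ℂ => psiZ z N) := by
  have hN0 : ((N : ℂ)) ≠ 0 := (Nat.cast_ne_zero (R := ℂ)).mpr hN
  have hcp : ∀ (x : ℂ), x ≠ 0 → ∀ (f : ℂ → ℂ), Differentiable ℂ f →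
      Differentiable ℂ (fun z : ℂ => x ^ f z) :=
    fun x hx f hf => hf.const_cpow (Or.inl hx)
  have hsum : Differentiable ℂ (fun z : ℂ => ∑ n ∈ Finset.Icc 1 N, (n : ℂ) ^ (-z)) := by
    apply Differentiable.fun_sum
    intro n hn
    have hn0 : ((n : ℂ)) ≠ 0 := (Nat.cast_ne_zero (R := ℂ)).mpr
      (by simp only [Finset.mem_Icc] at hn; omega)
    exact differentiable_neg.const_cpow (Or.inl hn0)
  have d1 : Differentiable ℂ (fun z : ℂ => 1 - z) := (differentiable_const 1).sub differentiable_id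
  have c1 : Differentiable ℂ (fun z : ℂ => (N : ℂ) ^ (1 - z)) := d1.const_cpow (Or.inl hN0)
  have c2 : Differentiable ℂ (fun z : ℂ => (N : ℂ) ^ (-z)) :=
    differentiable_neg.const_cpow (Or.inl hN0)
  have c3 : Differentiable ℂ (fun z : ℂ => (N : ℂ) ^ (-z - 1)) :=
    (differentiable_neg.sub_const 1).const_cpow (Or.inl hN0)
  exact (((d1.mul hsum).sub c1).sub ((d1.div_const 2).mul c2)).add
    (((d1.mul differentiable_id).div_const 12).mul c3)



lemma tendstoLocallyUniformlyOn_psiZ :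
    TendstoLocallyUniformlyOn (fun (M : ℕ) (z : ℂ) => psiZ z (M + 1)) PsiL atTop
      {z : ℂ | -2 < z.re} := by
  have hHopen : IsOpen {z : ℂ | -2 < z.re} := isOpen_lt continuous_const Complex.continuous_re
  rw [tendstoLocallyUniformlyOn_iff_forall_isCompact hHopen]
  intro K hK hKc
  rcases K.eq_empty_or_nonempty with rfl | hne
  · exact tendstoUniformlyOn_empty
  obtain ⟨z₀, hz₀K, hz₀min'⟩ := hKc.exists_isMinOn hne Complex.continuous_re.continuousOn
  have hz₀min : ∀ z ∈ K, z₀.re ≤ z.re := fun z hz => hz₀min' hz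
  have hσ : -2 < z₀.re := hK hz₀K
  obtain ⟨C, hC⟩ := hKc.exists_bound_of_continuousOn
    (f := fun z : ℂ => (1 - z) * (-z) * (-z - 1) * (-z - 2))
    (by fun_prop)
  have hCnn : 0 ≤ C := le_trans (norm_nonneg _) (hC z₀ hz₀K)
  have hu : Summable (fun k : ℕ => C * (1 / 48) * ((k + 1 : ℕ) : ℝ) ^ (-z₀.re - 3)) :=
    ((summable_nat_add_iff 1).2 (Real.summable_nat_rpow.2 (by linarith))).mul_left _
  have key := tendstoUniformlyOn_tsum_nat (F := ℂ) hu
    (f := fun (k : ℕ) (z : ℂ) => psiZ z (k + 1 + 1) - psiZ z (k + 1)) (s := K) ?_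
  · have key2 : TendstoUniformlyOn
        (fun (M : ℕ) (z : ℂ) => psiZ z 1 + ∑ k ∈ Finset.range M, (psiZ z (k + 1 + 1) - psiZ z (k + 1)))
        PsiL atTop K := by
      have hconst : TendstoUniformlyOn (fun (_ : ℕ) (z : ℂ) => psiZ z 1)
          (fun z => psiZ z 1) atTop K := by
        intro u hu
        filter_upwards with M z hz using by
          exact refl_mem_uniformity hu
      exact hconst.add key
    apply key2.congr
    filter_upwards with M z hz
    show psiZ z 1 + ∑ k ∈ Finset.range M, (psiZ z (k + 1 + 1) - psiZ z (k + 1)) = psiZ z (M + 1)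
    rw [Finset.sum_range_sub (fun k => psiZ z (k + 1)) M]
    ring
  · intro k z hz
    calc ‖psiZ z (k + 1 + 1) - psiZ z (k + 1)‖
        ≤ ‖(1 - z) * (-z) * (-z - 1) * (-z - 2)‖ * (1 / 48) * ((k + 1 : ℕ) : ℝ) ^ (-z.re - 3) :=
          norm_psiZ_diff z (k + 1) (by have := hK hz; simp only [Set.mem_setOf_eq] at this; linarith)
            (by omega)
      _ ≤ C * (1 / 48) * ((k + 1 : ℕ) : ℝ) ^ (-z₀.re - 3) := by
          gcongr ?_ * _ * _ ^ ?_
          · exact hC z hz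
          · push_cast; linarith
          · linarith [hz₀min z hz]

lemma differentiableOn_PsiL : DifferentiableOn ℂ PsiL {z : ℂ | -2 < z.re} :=
  tendstoLocallyUniformlyOn_psiZ.differentiableOn
    (Filter.Eventually.of_forall fun M => (differentiable_psiZ (M + 1) (by omega)).differentiableOn)
    (isOpen_lt continuous_const Complex.continuous_re)

lemma tendsto_natCpow_zero {c : ℂ} (hc : c.re < 0) :
    Tendsto (fun N : ℕ => (N : ℂ) ^ c) atTop (nhds 0) := by
  rw [tendsto_zero_iff_norm_tendsto_zero]
  have h1 : Tendsto (fun x : ℝ => x ^ c.re) atTop (nhds 0) := by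
    have := tendsto_rpow_neg_atTop (y := -c.re) (by linarith)
    simpa using this
  have h2 : Tendsto (fun N : ℕ => ((N : ℝ)) ^ c.re) atTop (nhds 0) :=
    h1.comp tendsto_natCast_atTop_atTop
  apply h2.congr'
  filter_upwards [eventually_ge_atTop 1] with N hN
  have hN0 : (0 : ℝ) < (N : ℝ) := by exact_mod_cast hN
  rw [show ((N : ℂ)) = (((N : ℝ)) : ℂ) by push_cast; ring,
    Complex.norm_cpow_eq_rpow_re_of_pos hN0]

lemma tendsto_psiZ_zeta (s : ℂ) (hs1 : 1 < s.re) :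
    Tendsto (psiZ s) atTop (nhds ((1 - s) * riemannZeta s)) := by
  have hs0 : s ≠ 0 := by rintro rfl; simp at hs1; linarith
  have hsummable : Summable (fun n : ℕ => (n : ℂ) ^ (-s)) := by
    apply (Complex.summable_one_div_nat_cpow.mpr hs1).congr
    intro n
    rw [Complex.cpow_neg, one_div]
  have hz : riemannZeta s = ∑' n : ℕ, (n : ℂ) ^ (-s) := by
    rw [zeta_eq_tsum_one_div_nat_cpow hs1]
    exact tsum_congr fun n => by rw [Complex.cpow_neg, one_div]
  have h1 : Tendsto (fun N : ℕ => ∑ n ∈ Finset.range N, (n : ℂ) ^ (-s)) atTop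
      (nhds (riemannZeta s)) := by
    rw [hz]; exact hsummable.hasSum.tendsto_sum_nat
  have h1' : Tendsto (fun N : ℕ => ∑ n ∈ Finset.Icc 1 N, (n : ℂ) ^ (-s)) atTop
      (nhds (riemannZeta s)) := by
    have heq : ∀ N : ℕ, ∑ n ∈ Finset.Icc 1 N, (n : ℂ) ^ (-s)
        = ∑ n ∈ Finset.range (N + 1), (n : ℂ) ^ (-s) := by
      intro N
      apply Finset.sum_subset
      · intro x hx; simp only [Finset.mem_Icc] at hx; simp only [Finset.mem_range]; omega
      · intro x hx hnx
        simp only [Finset.mem_range] at hx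
        simp only [Finset.mem_Icc] at hnx
        have hx0 : x = 0 := by omega
        subst hx0
        simp only [Nat.cast_zero]
        exact Complex.zero_cpow (neg_ne_zero.mpr hs0)
    rw [show (fun N : ℕ => ∑ n ∈ Finset.Icc 1 N, (n : ℂ) ^ (-s))
      = (fun N : ℕ => ∑ n ∈ Finset.range (N + 1), (n : ℂ) ^ (-s)) from funext heq]
    exact (tendsto_add_atTop_iff_nat 1).2 h1
  have t1 : Tendsto (fun N : ℕ => (N : ℂ) ^ (1 - s)) atTop (nhds 0) :=
    tendsto_natCpow_zero (by simp [Complex.sub_re]; linarith)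
  have t2 : Tendsto (fun N : ℕ => (N : ℂ) ^ (-s)) atTop (nhds 0) :=
    tendsto_natCpow_zero (by simp [Complex.neg_re]; linarith)
  have t3 : Tendsto (fun N : ℕ => (N : ℂ) ^ (-s - 1)) atTop (nhds 0) :=
    tendsto_natCpow_zero (by simp [Complex.sub_re, Complex.neg_re]; linarith)
  have H := (((h1'.const_mul (1 - s)).sub t1).sub (t2.const_mul ((1 - s) / 2))).add
    (t3.const_mul ((1 - s) * s / 12))
  simp only [mul_zero, sub_zero, add_zero] at H
  exact H

end ZetaEM

/-- The limit lim_{N→∞} (∑_{n=1}^N n^{-s} - N^{1-s}/(1-s) - (1/2)N^{-s} + (s/12)N^{-s-1})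
exists and equals ζ(s) for Re(s) > -2, s ≠ 1. -/
theorem zeta_limit_re_gt_neg_two (s : ℂ) (hs : -2 < s.re) (hs' : s ≠ 1) :
    Tendsto
      (fun N : ℕ => (∑ n ∈ Icc 1 N, (n : ℂ) ^ (-s)) - (N : ℂ) ^ (1 - s) / (1 - s)
        - (1 / 2) * (N : ℂ) ^ (-s) + (s / 12) * (N : ℂ) ^ (-s - 1))
      atTop (nhds (riemannZeta s)) := by
  have hHopen : IsOpen {z : ℂ | -2 < z.re} := isOpen_lt continuous_const Complex.continuous_re
  have hHpre : IsPreconnected {z : ℂ | -2 < z.re} :=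
    (convex_halfSpace_re_gt (-2)).isPreconnected
  set f : ℂ → ℂ := fun z => (1 - z) * riemannZeta z with hfdef
  have hftend : Tendsto f (nhdsWithin 1 {(1:ℂ)}ᶜ) (nhds (-1)) := by
    have h := riemannZeta_residue_one
    exact h.neg.congr fun z => by simp only [hfdef]; ring
  set W : ℂ → ℂ := Function.update f 1 (limUnder (nhdsWithin 1 {(1:ℂ)}ᶜ) f) with hWdef
  have hWdiff : DifferentiableOn ℂ W {z : ℂ | -2 < z.re} := by
    apply Complex.differentiableOn_update_limUnder_of_isLittleO
      (hHopen.mem_nhds (by norm_num : (1:ℂ) ∈ {z : ℂ | -2 < z.re}))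
    · intro z hz
      have hz1 : z ≠ 1 := by simpa using hz.2
      exact (((differentiableAt_const 1).sub differentiableAt_id).mul
        (differentiableAt_riemannZeta hz1)).differentiableWithinAt
    · exact Filter.IsBoundedUnder.isLittleO_sub_self_inv (f := fun z => f z - f 1)
        ((hftend.sub_const (f 1)).norm.isBoundedUnder_le)
  have hΨa : AnalyticOnNhd ℂ PsiL {z : ℂ | -2 < z.re} :=
    differentiableOn_PsiL.analyticOnNhd hHopen
  have hWa : AnalyticOnNhd ℂ W {z : ℂ | -2 < z.re} := hWdiff.analyticOnNhd hHopen
  have hEq : Set.EqOn PsiL W {z : ℂ | -2 < z.re} := by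
    apply hΨa.eqOn_of_preconnected_of_eventuallyEq hWa hHpre (z₀ := 2)
      (by norm_num : (2:ℂ) ∈ {z : ℂ | -2 < z.re})
    have hV : IsOpen {z : ℂ | 1 < z.re} := isOpen_lt continuous_const Complex.continuous_re
    have h2V : (2:ℂ) ∈ {z : ℂ | 1 < z.re} := by norm_num
    filter_upwards [hV.mem_nhds h2V] with z hz
    have hz' : 1 < z.re := hz
    have hz1 : z ≠ 1 := by rintro rfl; norm_num at hz'
    have e1 : W z = f z := Function.update_of_ne hz1 _ _
    rw [e1]
    exact tendsto_nhds_unique (tendsto_psiZ z (by linarith)) (tendsto_psiZ_zeta z hz')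
  have hPsiL_eq : PsiL s = (1 - s) * riemannZeta s := by
    have h := hEq (show s ∈ {z : ℂ | -2 < z.re} from hs)
    rwa [hWdef, Function.update_of_ne hs'] at h
  have h1s : (1 : ℂ) - s ≠ 0 := sub_ne_zero.mpr (Ne.symm hs')
  have htend := (tendsto_psiZ s hs).const_mul ((1 - s)⁻¹)
  rw [hPsiL_eq, inv_mul_cancel_left₀ h1s] at htend
  apply htend.congr
  intro N
  show (1 - s)⁻¹ * psiZ s N = _
  rw [psiZ]
  field_simp
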